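/- Let D = {(x,t_2,t_3) ∈ ℝ³ : x⁶ + 45xt_3 − 15t_2x³ − 45t_2² ≠ 0} and define on D the rational functions q_1 = −3(675t_3² − 270t_3x⁵ + 2x¹⁰ + 675x⁴t_2² − 1350xt_2³)/(x⁶ + 45xt_3 − 15t_2x³ − 45t_2²)² and q_2 = 45(x³ − 3t_2)(x⁵ + 15x²t_2 − 30t_3)/(x⁶ + 45xt_3 − 15t_2x³ − 45t_2²)². Then on D the second Antonowicz–Fordy field vanishes identically: 2q_2 − 3q_1² − (1/2)∂_x² q_1 = 0; consequently, under the map u_1 = 2q_1, u_2 = 2q_2 − 3q_1² − (1/2)∂_x² q_1, this zero-energy solution of the two-component cKdV hierarchy with α = 1 reduces to the solution u_1 = 2q_1, u_2 = 0 of the KdV hierarchy (α = 0, σ = 1). -/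

import Mathlib

/-- `q₁ = −3(675t₃² − 270t₃x⁵ + 2x¹⁰ + 675x⁴t₂² − 1350xt₂³)
/(x⁶ + 45xt₃ − 15t₂x³ − 45t₂²)²`. -/
noncomputable def q1sol (x t2 t3 : ℝ) : ℝ :=
  -3 * (675 * t3 ^ 2 - 270 * t3 * x ^ 5 + 2 * x ^ 10 + 675 * x ^ 4 * t2 ^ 2
      - 1350 * x * t2 ^ 3)
    / (x ^ 6 + 45 * x * t3 - 15 * t2 * x ^ 3 - 45 * t2 ^ 2) ^ 2

/-- `q₂ = 45(x³ − 3t₂)(x⁵ + 15x²t₂ − 30t₃)/(x⁶ + 45xt₃ − 15t₂x³ − 45t₂²)²`. -/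
noncomputable def q2sol (x t2 t3 : ℝ) : ℝ :=
  45 * (x ^ 3 - 3 * t2) * (x ^ 5 + 15 * x ^ 2 * t2 - 30 * t3)
    / (x ^ 6 + 45 * x * t3 - 15 * t2 * x ^ 3 - 45 * t2 ^ 2) ^ 2

namespace ZEaux

/-- numerator of `q₁` as a function of `x` -/
noncomputable def nn (t2 t3 x : ℝ) : ℝ :=
  -3 * (675 * t3 ^ 2 - 270 * t3 * x ^ 5 + 2 * x ^ 10 + 675 * x ^ 4 * t2 ^ 2
      - 1350 * x * t2 ^ 3)

noncomputable def nn1 (t2 t3 x : ℝ) : ℝ :=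
  -3 * (-1350 * t3 * x ^ 4 + 20 * x ^ 9 + 2700 * x ^ 3 * t2 ^ 2 - 1350 * t2 ^ 3)

noncomputable def nn2 (t2 t3 x : ℝ) : ℝ :=
  -3 * (-5400 * t3 * x ^ 3 + 180 * x ^ 8 + 8100 * x ^ 2 * t2 ^ 2)

noncomputable def nn3 (t2 t3 x : ℝ) : ℝ :=
  -3 * (-16200 * t3 * x ^ 2 + 1440 * x ^ 7 + 16200 * x * t2 ^ 2)

/-- denominator `x⁶ + 45xt₃ − 15t₂x³ − 45t₂²` -/
noncomputable def dd (t2 t3 x : ℝ) : ℝ :=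
  x ^ 6 + 45 * x * t3 - 15 * t2 * x ^ 3 - 45 * t2 ^ 2

noncomputable def dd1 (t2 t3 x : ℝ) : ℝ := 6 * x ^ 5 + 45 * t3 - 45 * t2 * x ^ 2

noncomputable def dd2 (t2 t3 x : ℝ) : ℝ := 30 * x ^ 4 - 90 * t2 * x

noncomputable def dd3 (t2 t3 x : ℝ) : ℝ := 120 * x ^ 3 - 90 * t2

noncomputable def A1 (t2 t3 x : ℝ) : ℝ :=
  nn1 t2 t3 x * dd t2 t3 x - 2 * nn t2 t3 x * dd1 t2 t3 x

noncomputable def B1 (t2 t3 x : ℝ) : ℝ :=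
  nn2 t2 t3 x * dd t2 t3 x - nn1 t2 t3 x * dd1 t2 t3 x - 2 * nn t2 t3 x * dd2 t2 t3 x

noncomputable def C1 (t2 t3 x : ℝ) : ℝ :=
  nn3 t2 t3 x * dd t2 t3 x - 3 * nn1 t2 t3 x * dd2 t2 t3 x - 2 * nn t2 t3 x * dd3 t2 t3 x

noncomputable def A2 (t2 t3 x : ℝ) : ℝ :=
  B1 t2 t3 x * dd t2 t3 x - 3 * A1 t2 t3 x * dd1 t2 t3 x

noncomputable def B2 (t2 t3 x : ℝ) : ℝ :=
  C1 t2 t3 x * dd t2 t3 x - 2 * B1 t2 t3 x * dd1 t2 t3 x - 3 * A1 t2 t3 x * dd2 t2 t3 x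

/-- first `x`-derivative of `q₁` -/
noncomputable def gg1 (t2 t3 x : ℝ) : ℝ := A1 t2 t3 x / dd t2 t3 x ^ 3

/-- second `x`-derivative of `q₁` -/
noncomputable def gg2 (t2 t3 x : ℝ) : ℝ := A2 t2 t3 x / dd t2 t3 x ^ 4

/-- third `x`-derivative of `q₁` -/
noncomputable def gg3 (t2 t3 x : ℝ) : ℝ :=
  (B2 t2 t3 x * dd t2 t3 x - 4 * A2 t2 t3 x * dd1 t2 t3 x) / dd t2 t3 x ^ 5

lemma hnn (t2 t3 x : ℝ) : HasDerivAt (fun y => nn t2 t3 y) (nn1 t2 t3 x) x := by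
  have h := ((((hasDerivAt_const x (-2025 * t3 ^ 2)).add
      ((hasDerivAt_pow 5 x).const_mul (810 * t3))).add
      ((hasDerivAt_pow 10 x).const_mul (-6))).add
      ((hasDerivAt_pow 4 x).const_mul (-2025 * t2 ^ 2))).add
      (((hasDerivAt_id' x).const_mul (4050 * t2 ^ 3)))
  have hfun : (fun y => nn t2 t3 y)
      = fun y => -2025 * t3 ^ 2 + 810 * t3 * y ^ 5 + -6 * y ^ 10
        + -2025 * t2 ^ 2 * y ^ 4 + 4050 * t2 ^ 3 * y := by
    funext y; simp only [nn]; ring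
  rw [hfun]
  refine h.congr_deriv ?_
  simp only [nn1]; push_cast; ring

lemma hnn1 (t2 t3 x : ℝ) : HasDerivAt (fun y => nn1 t2 t3 y) (nn2 t2 t3 x) x := by
  have h := (((hasDerivAt_const x (4050 * t2 ^ 3)).add
      ((hasDerivAt_pow 4 x).const_mul (4050 * t3))).add
      ((hasDerivAt_pow 9 x).const_mul (-60))).add
      ((hasDerivAt_pow 3 x).const_mul (-8100 * t2 ^ 2))
  have hfun : (fun y => nn1 t2 t3 y)
      = fun y => 4050 * t2 ^ 3 + 4050 * t3 * y ^ 4 + -60 * y ^ 9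
        + -8100 * t2 ^ 2 * y ^ 3 := by
    funext y; simp only [nn1]; ring
  rw [hfun]
  refine h.congr_deriv ?_
  simp only [nn2]; push_cast; ring

lemma hnn2 (t2 t3 x : ℝ) : HasDerivAt (fun y => nn2 t2 t3 y) (nn3 t2 t3 x) x := by
  have h := (((hasDerivAt_pow 3 x).const_mul (16200 * t3)).add
      ((hasDerivAt_pow 8 x).const_mul (-540))).add
      ((hasDerivAt_pow 2 x).const_mul (-24300 * t2 ^ 2))
  have hfun : (fun y => nn2 t2 t3 y)
      = fun y => 16200 * t3 * y ^ 3 + -540 * y ^ 8 + -24300 * t2 ^ 2 * y ^ 2 := by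
    funext y; simp only [nn2]; ring
  rw [hfun]
  refine h.congr_deriv ?_
  simp only [nn3]; push_cast; ring

lemma hdd (t2 t3 x : ℝ) : HasDerivAt (fun y => dd t2 t3 y) (dd1 t2 t3 x) x := by
  have h := (((hasDerivAt_pow 6 x).add
      (((hasDerivAt_id' x).const_mul (45 * t3)))).add
      ((hasDerivAt_pow 3 x).const_mul (-15 * t2))).add
      (hasDerivAt_const x (-45 * t2 ^ 2))
  have hfun : (fun y => dd t2 t3 y)
      = fun y => y ^ 6 + 45 * t3 * y + -15 * t2 * y ^ 3 + -45 * t2 ^ 2 := by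
    funext y; simp only [dd]; ring
  rw [hfun]
  refine h.congr_deriv ?_
  simp only [dd1]; push_cast; ring

lemma hdd1 (t2 t3 x : ℝ) : HasDerivAt (fun y => dd1 t2 t3 y) (dd2 t2 t3 x) x := by
  have h := (((hasDerivAt_pow 5 x).const_mul 6).add
      (hasDerivAt_const x (45 * t3))).add
      ((hasDerivAt_pow 2 x).const_mul (-45 * t2))
  have hfun : (fun y => dd1 t2 t3 y)
      = fun y => 6 * y ^ 5 + 45 * t3 + -45 * t2 * y ^ 2 := by
    funext y; simp only [dd1]; ring
  rw [hfun]
  refine h.congr_deriv ?_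
  simp only [dd2]; push_cast; ring

lemma hdd2 (t2 t3 x : ℝ) : HasDerivAt (fun y => dd2 t2 t3 y) (dd3 t2 t3 x) x := by
  have h := ((hasDerivAt_pow 4 x).const_mul 30).add
      (((hasDerivAt_id' x).const_mul (-90 * t2)))
  have hfun : (fun y => dd2 t2 t3 y)
      = fun y => 30 * y ^ 4 + -90 * t2 * y := by
    funext y; simp only [dd2]; ring
  rw [hfun]
  refine h.congr_deriv ?_
  simp only [dd3]; push_cast; ring

lemma hA1 (t2 t3 x : ℝ) : HasDerivAt (fun y => A1 t2 t3 y) (B1 t2 t3 x) x := by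
  have h := ((hnn1 t2 t3 x).mul (hdd t2 t3 x)).sub
      (((hnn t2 t3 x).const_mul 2).mul (hdd1 t2 t3 x))
  have hfun : (fun y => A1 t2 t3 y)
      = fun y => nn1 t2 t3 y * dd t2 t3 y - 2 * nn t2 t3 y * dd1 t2 t3 y := by
    funext y; simp only [A1]
  rw [hfun]
  refine h.congr_deriv ?_
  simp only [B1]; ring

lemma hB1 (t2 t3 x : ℝ) : HasDerivAt (fun y => B1 t2 t3 y) (C1 t2 t3 x) x := by
  have h := (((hnn2 t2 t3 x).mul (hdd t2 t3 x)).sub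
      ((hnn1 t2 t3 x).mul (hdd1 t2 t3 x))).sub
      (((hnn t2 t3 x).const_mul 2).mul (hdd2 t2 t3 x))
  have hfun : (fun y => B1 t2 t3 y)
      = fun y => nn2 t2 t3 y * dd t2 t3 y - nn1 t2 t3 y * dd1 t2 t3 y
          - 2 * nn t2 t3 y * dd2 t2 t3 y := by
    funext y; simp only [B1]
  rw [hfun]
  refine h.congr_deriv ?_
  simp only [C1, nn3, nn2, nn1, nn, dd, dd1, dd2, dd3]; ring

lemma hA2 (t2 t3 x : ℝ) : HasDerivAt (fun y => A2 t2 t3 y) (B2 t2 t3 x) x := by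
  have h := ((hB1 t2 t3 x).mul (hdd t2 t3 x)).sub
      (((hA1 t2 t3 x).const_mul 3).mul (hdd1 t2 t3 x))
  have hfun : (fun y => A2 t2 t3 y)
      = fun y => B1 t2 t3 y * dd t2 t3 y - 3 * A1 t2 t3 y * dd1 t2 t3 y := by
    funext y; simp only [A2]
  rw [hfun]
  refine h.congr_deriv ?_
  simp only [B2]; ring

lemma hq1x (t2 t3 x : ℝ) (h : dd t2 t3 x ≠ 0) :
    HasDerivAt (fun y => q1sol y t2 t3) (gg1 t2 t3 x) x := by
  have h0 := (hnn t2 t3 x).div ((hdd t2 t3 x).pow 2) (pow_ne_zero 2 h)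
  have hfun : (fun y => q1sol y t2 t3) = fun y => nn t2 t3 y / dd t2 t3 y ^ 2 := by
    funext y; simp only [q1sol, nn, dd]
  rw [hfun]
  refine h0.congr_deriv ?_
  simp only [gg1, A1, Pi.pow_apply]
  field_simp
  push_cast
  ring

lemma hg1x (t2 t3 x : ℝ) (h : dd t2 t3 x ≠ 0) :
    HasDerivAt (fun y => gg1 t2 t3 y) (gg2 t2 t3 x) x := by
  have h0 := (hA1 t2 t3 x).div ((hdd t2 t3 x).pow 3) (pow_ne_zero 3 h)
  have hfun : (fun y => gg1 t2 t3 y) = fun y => A1 t2 t3 y / dd t2 t3 y ^ 3 := by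
    funext y; simp only [gg1]
  rw [hfun]
  refine h0.congr_deriv ?_
  simp only [gg2, A2, Pi.pow_apply]
  field_simp
  push_cast
  ring

lemma hg2x (t2 t3 x : ℝ) (h : dd t2 t3 x ≠ 0) :
    HasDerivAt (fun y => gg2 t2 t3 y) (gg3 t2 t3 x) x := by
  have h0 := (hA2 t2 t3 x).div ((hdd t2 t3 x).pow 4) (pow_ne_zero 4 h)
  have hfun : (fun y => gg2 t2 t3 y) = fun y => A2 t2 t3 y / dd t2 t3 y ^ 4 := by
    funext y; simp only [gg2]
  rw [hfun]
  refine h0.congr_deriv ?_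
  simp only [gg3, Pi.pow_apply]
  field_simp
  push_cast
  ring

lemma hUopen (t2 t3 : ℝ) : IsOpen {y : ℝ | dd t2 t3 y ≠ 0} := by
  have hc : Continuous fun y => dd t2 t3 y := by unfold dd; fun_prop
  exact isOpen_compl_singleton.preimage hc

end ZEaux

open ZEaux in
/-- On the set where `x⁶ + 45xt₃ − 15t₂x³ − 45t₂² ≠ 0` the second Antonowicz–Fordy
field vanishes identically: `2q₂ − 3q₁² − (1/2)q_{1,xx} = 0`.  Consequently, under the
map `u₁ = 2q₁`, `u₂ = 2q₂ − 3q₁² − (1/2)q_{1,xx}`, this zero-energy solution of the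
two-component cKdV hierarchy with `α = 1` reduces to the solution `u₁ = 2q₁`, `u₂ = 0`
of the KdV hierarchy (`α = 0`, `σ = 1`): `u₁` satisfies
`u_{1,t₂} = (3/2)u₁u_{1,x} + (1/4)u_{1,xxx}`. -/
theorem zero_energy_alpha1_reduces_to_kdv :
    ∀ x t2 t3 : ℝ, x ^ 6 + 45 * x * t3 - 15 * t2 * x ^ 3 - 45 * t2 ^ 2 ≠ 0 →
      (2 * q2sol x t2 t3 - 3 * q1sol x t2 t3 ^ 2
          - (1 / 2) * iteratedDeriv 2 (fun y => q1sol y t2 t3) x = 0)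
      ∧ (deriv (fun s => 2 * q1sol x s t3) t2
          = (3 / 2) * (2 * q1sol x t2 t3) * deriv (fun y => 2 * q1sol y t2 t3) x
            + (1 / 4) * iteratedDeriv 3 (fun y => 2 * q1sol y t2 t3) x) := by
  intro x t2 t3 hx0
  have hx : dd t2 t3 x ≠ 0 := hx0
  have hUx : {y : ℝ | dd t2 t3 y ≠ 0} ∈ nhds x := (hUopen t2 t3).mem_nhds hx
  -- first derivative of q1 on the open set
  have k1 : ∀ y, dd t2 t3 y ≠ 0 → deriv (fun z => q1sol z t2 t3) y = gg1 t2 t3 y :=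
    fun y hy => (hq1x t2 t3 y hy).deriv
  -- second derivative at any point of the open set
  have k2 : ∀ y, dd t2 t3 y ≠ 0 →
      iteratedDeriv 2 (fun z => q1sol z t2 t3) y = gg2 t2 t3 y := by
    intro y hy
    have hUy : {z : ℝ | dd t2 t3 z ≠ 0} ∈ nhds y := (hUopen t2 t3).mem_nhds hy
    have hev : deriv (fun z => q1sol z t2 t3) =ᶠ[nhds y] fun z => gg1 t2 t3 z :=
      Filter.eventuallyEq_of_mem hUy fun z hz => k1 z hz
    rw [iteratedDeriv_succ, iteratedDeriv_one, hev.deriv_eq, (hg1x t2 t3 y hy).deriv]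
  -- third derivative at x
  have k3 : iteratedDeriv 3 (fun z => q1sol z t2 t3) x = gg3 t2 t3 x := by
    have hev : iteratedDeriv 2 (fun z => q1sol z t2 t3) =ᶠ[nhds x]
        fun z => gg2 t2 t3 z :=
      Filter.eventuallyEq_of_mem hUx fun z hz => k2 z hz
    rw [iteratedDeriv_succ, hev.deriv_eq, (hg2x t2 t3 x hx).deriv]
  constructor
  · -- first identity
    rw [k2 x hx]
    have hq1 : q1sol x t2 t3 = nn t2 t3 x / dd t2 t3 x ^ 2 := by
      simp only [q1sol, nn, dd]
    rw [hq1]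
    have hdne : (x ^ 6 + 45 * x * t3 - 15 * t2 * x ^ 3 - 45 * t2 ^ 2) ≠ 0 := hx0
    simp only [q2sol, gg2, A2, B1, A1, nn, nn1, nn2, dd, dd1, dd2]
    field_simp
    ring
  · -- second identity
    -- iterated derivatives in x of 2*q1
    have m1 : deriv (fun y => 2 * q1sol y t2 t3) x = 2 * gg1 t2 t3 x :=
      ((hq1x t2 t3 x hx).const_mul 2).deriv
    have m3 : iteratedDeriv 3 (fun y => 2 * q1sol y t2 t3) x = 2 * gg3 t2 t3 x := by
      have j1 : ∀ y, dd t2 t3 y ≠ 0 →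
          deriv (fun z => 2 * q1sol z t2 t3) y = 2 * gg1 t2 t3 y :=
        fun y hy => ((hq1x t2 t3 y hy).const_mul 2).deriv
      have j2 : ∀ y, dd t2 t3 y ≠ 0 →
          iteratedDeriv 2 (fun z => 2 * q1sol z t2 t3) y = 2 * gg2 t2 t3 y := by
        intro y hy
        have hUy : {z : ℝ | dd t2 t3 z ≠ 0} ∈ nhds y := (hUopen t2 t3).mem_nhds hy
        have hev : deriv (fun z => 2 * q1sol z t2 t3) =ᶠ[nhds y]
            fun z => 2 * gg1 t2 t3 z :=
          Filter.eventuallyEq_of_mem hUy fun z hz => j1 z hz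
        rw [iteratedDeriv_succ, iteratedDeriv_one, hev.deriv_eq,
          ((hg1x t2 t3 y hy).const_mul 2).deriv]
      have hev : iteratedDeriv 2 (fun z => 2 * q1sol z t2 t3) =ᶠ[nhds x]
          fun z => 2 * gg2 t2 t3 z :=
        Filter.eventuallyEq_of_mem hUx fun z hz => j2 z hz
      rw [iteratedDeriv_succ, hev.deriv_eq, ((hg2x t2 t3 x hx).const_mul 2).deriv]
    -- derivative in t2
    have mt : deriv (fun s => 2 * q1sol x s t3) t2
        = 2 * ((-3 * (1350 * x ^ 4 * t2 - 4050 * x * t2 ^ 2) * dd t2 t3 x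
            - 2 * nn t2 t3 x * (-15 * x ^ 3 - 90 * t2)) / dd t2 t3 x ^ 3) := by
      have hnum : HasDerivAt
          (fun s : ℝ => -3 * (675 * t3 ^ 2 - 270 * t3 * x ^ 5 + 2 * x ^ 10
              + 675 * x ^ 4 * s ^ 2 - 1350 * x * s ^ 3))
          (-3 * (1350 * x ^ 4 * t2 - 4050 * x * t2 ^ 2)) t2 := by
        have h := ((hasDerivAt_const t2 (-3 * (675 * t3 ^ 2 - 270 * t3 * x ^ 5
            + 2 * x ^ 10))).add
            ((hasDerivAt_pow 2 t2).const_mul (-2025 * x ^ 4))).add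
            ((hasDerivAt_pow 3 t2).const_mul (4050 * x))
        have hfun : (fun s : ℝ => -3 * (675 * t3 ^ 2 - 270 * t3 * x ^ 5 + 2 * x ^ 10
              + 675 * x ^ 4 * s ^ 2 - 1350 * x * s ^ 3))
            = fun s => -3 * (675 * t3 ^ 2 - 270 * t3 * x ^ 5 + 2 * x ^ 10)
              + -2025 * x ^ 4 * s ^ 2 + 4050 * x * s ^ 3 := by
          funext s; ring
        rw [hfun]
        refine h.congr_deriv ?_
        push_cast; ring
      have hden : HasDerivAt
          (fun s : ℝ => x ^ 6 + 45 * x * t3 - 15 * s * x ^ 3 - 45 * s ^ 2)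
          (-15 * x ^ 3 - 90 * t2) t2 := by
        have h := ((hasDerivAt_const t2 (x ^ 6 + 45 * x * t3)).add
            (((hasDerivAt_id' t2).const_mul (-15 * x ^ 3)))).add
            ((hasDerivAt_pow 2 t2).const_mul (-45))
        have hfun : (fun s : ℝ => x ^ 6 + 45 * x * t3 - 15 * s * x ^ 3 - 45 * s ^ 2)
            = fun s => (x ^ 6 + 45 * x * t3) + -15 * x ^ 3 * s + -45 * s ^ 2 := by
          funext s; ring
        rw [hfun]
        refine h.congr_deriv ?_
        push_cast; ring
      have hd2 : (fun s : ℝ => x ^ 6 + 45 * x * t3 - 15 * s * x ^ 3 - 45 * s ^ 2) t2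
          ≠ 0 := by
        simpa [dd] using hx
      have h0 := ((hnum.div (hden.pow 2) (pow_ne_zero 2 hd2)).const_mul 2)
      have hfun : (fun s => 2 * q1sol x s t3)
          = fun s => 2 * ((-3 * (675 * t3 ^ 2 - 270 * t3 * x ^ 5 + 2 * x ^ 10
              + 675 * x ^ 4 * s ^ 2 - 1350 * x * s ^ 3))
            / (x ^ 6 + 45 * x * t3 - 15 * s * x ^ 3 - 45 * s ^ 2) ^ 2) := by
        funext s; simp only [q1sol]
      rw [hfun]
      refine HasDerivAt.deriv ?_
      refine h0.congr_deriv ?_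
      have hdne : (x ^ 6 + 45 * x * t3 - 15 * t2 * x ^ 3 - 45 * t2 ^ 2) ≠ 0 := hx0
      have hdd' : x ^ 6 + 45 * x * t3 - 15 * t2 * x ^ 3 - 45 * t2 ^ 2 = dd t2 t3 x := rfl
      simp only [Pi.pow_apply, hdd']
      field_simp
      simp only [nn, dd]
      push_cast
      ring
    rw [mt, m1, m3]
    have hq1 : q1sol x t2 t3 = nn t2 t3 x / dd t2 t3 x ^ 2 := by
      simp only [q1sol, nn, dd]
    rw [hq1]
    have hdne : (x ^ 6 + 45 * x * t3 - 15 * t2 * x ^ 3 - 45 * t2 ^ 2) ≠ 0 := hx0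
    simp only [gg1, gg3, B2, A2, C1, B1, A1]
    field_simp
    simp only [nn, nn1, nn2, nn3, dd, dd1, dd2, dd3]
    ring
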